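/- arXiv:1307.0346 — 2 statements merged into one kernel-verified Lean document; each statement's English description precedes it below -/
import Mathlib

section
/- Let σ < 0 be a real constant, ε ∈ {+1, −1}, and let p = p(u) be a differentiable function on an open interval I. Consider Φ(u,v) := 1/(p(u) + 2ε√(−σ)·v) on an open set where the denominator is nonzero. Then Φ satisfies (†): Φ_vv − 2v·Φ_uv − 4Φ_u = 0 if and only if p(u)·p'(u) = 2σ for all u ∈ I. -/
/-- First partial derivative of `f = f(u,v)` with respect to the first variable. -/
noncomputable def pd1 (f : ℝ → ℝ → ℝ) (u v : ℝ) : ℝ := deriv (fun t => f t v) u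

/-- First partial derivative of `f = f(u,v)` with respect to the second variable. -/
noncomputable def pd2 (f : ℝ → ℝ → ℝ) (u v : ℝ) : ℝ := deriv (f u) v

/-- For `σ < 0` and `Φ(u,v) = 1/(p(u) + 2ε√(−σ)v)`, the transformed projective PDE
`Φ_vv − 2v·Φ_uv − 4Φ_u = 0` (wherever the denominator is nonzero) holds
if and only if `p·p' = 2σ` on `I`. -/
theorem stmt_10 (σ : ℝ) (hσ : σ < 0) (ε : ℝ) (hε : ε = 1 ∨ ε = -1)
    (a b : ℝ) (p : ℝ → ℝ)
    (hp : ∀ u ∈ Set.Ioo a b, DifferentiableAt ℝ p u)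
    (Φ : ℝ → ℝ → ℝ)
    (hΦ : ∀ u v, Φ u v = 1 / (p u + 2 * ε * Real.sqrt (-σ) * v)) :
    (∀ u ∈ Set.Ioo a b, ∀ v : ℝ, p u + 2 * ε * Real.sqrt (-σ) * v ≠ 0 →
        pd2 (pd2 Φ) u v - 2 * v * pd2 (pd1 Φ) u v - 4 * pd1 Φ u v = 0) ↔
    (∀ u ∈ Set.Ioo a b, p u * deriv p u = 2 * σ) := by
  set c : ℝ := 2 * ε * Real.sqrt (-σ) with hcdef
  have hs : (0:ℝ) < Real.sqrt (-σ) := Real.sqrt_pos.mpr (by linarith)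
  have hεne : ε ≠ 0 := by rcases hε with h | h <;> rw [h] <;> norm_num
  have hcne : c ≠ 0 := by
    rw [hcdef]
    exact mul_ne_zero (mul_ne_zero two_ne_zero hεne) (ne_of_gt hs)
  have hc2 : c ^ 2 = -4 * σ := by
    have hsq : Real.sqrt (-σ) ^ 2 = -σ := Real.sq_sqrt (by linarith)
    have hε2 : ε ^ 2 = 1 := by rcases hε with h | h <;> rw [h] <;> norm_num
    rw [hcdef]; ring_nf; nlinarith [hsq, hε2]
  -- first v-derivative
  have hA : ∀ u v, p u + c * v ≠ 0 → pd2 Φ u v = -c / (p u + c * v) ^ 2 := by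
    intro u v hD
    have h1 : HasDerivAt (fun v' => p u + c * v') c v := by
      simpa using ((hasDerivAt_id v).const_mul c).const_add (p u)
    have h2 := h1.inv hD
    have hfun : Φ u = fun v' => (p u + c * v')⁻¹ := by
      funext v'; rw [hΦ, one_div]
    rw [pd2, hfun]; exact h2.deriv
  -- u-derivative
  have hB : ∀ u ∈ Set.Ioo a b, ∀ v : ℝ, p u + c * v ≠ 0 →
      pd1 Φ u v = -(deriv p u) / (p u + c * v) ^ 2 := by
    intro u hu v hD
    have h1 : HasDerivAt (fun t => p t + c * v) (deriv p u) u :=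
      ((hp u hu).hasDerivAt).add_const (c * v)
    have h2 := h1.inv hD
    have hfun : (fun t => Φ t v) = fun t => (p t + c * v)⁻¹ := by
      funext t; rw [hΦ, one_div]
    rw [pd1, hfun]; exact h2.deriv
  -- second v-derivative
  have hC : ∀ u v, p u + c * v ≠ 0 →
      pd2 (pd2 Φ) u v = 2 * c ^ 2 / (p u + c * v) ^ 3 := by
    intro u v hD
    have hct : ContinuousAt (fun v' => p u + c * v') v := by fun_prop
    have hev : ∀ᶠ v' in nhds v, p u + c * v' ≠ 0 := hct.eventually_ne hD
    have heq : pd2 Φ u =ᶠ[nhds v] fun v' => -c * ((p u + c * v') ^ 2)⁻¹ := by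
      filter_upwards [hev] with v' h
      rw [hA u v' h, div_eq_mul_inv]
    have h1 : HasDerivAt (fun v' => p u + c * v') c v := by
      simpa using ((hasDerivAt_id v).const_mul c).const_add (p u)
    have h2 := (h1.pow 2).inv (pow_ne_zero 2 hD)
    have h4 := h2.const_mul (-c)
    rw [pd2, heq.deriv_eq, show deriv (fun v' => -c * ((p u + c * v') ^ 2)⁻¹) v = _ from h4.deriv]
    simp only [Pi.pow_apply]
    field_simp
    ring
  -- mixed derivative
  have hM : ∀ u ∈ Set.Ioo a b, ∀ v : ℝ, p u + c * v ≠ 0 →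
      pd2 (pd1 Φ) u v = 2 * c * deriv p u / (p u + c * v) ^ 3 := by
    intro u hu v hD
    have hct : ContinuousAt (fun v' => p u + c * v') v := by fun_prop
    have hev : ∀ᶠ v' in nhds v, p u + c * v' ≠ 0 := hct.eventually_ne hD
    have heq : pd1 Φ u =ᶠ[nhds v] fun v' => -(deriv p u) * ((p u + c * v') ^ 2)⁻¹ := by
      filter_upwards [hev] with v' h
      rw [hB u hu v' h, div_eq_mul_inv]
    have h1 : HasDerivAt (fun v' => p u + c * v') c v := by
      simpa using ((hasDerivAt_id v).const_mul c).const_add (p u)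
    have h2 := (h1.pow 2).inv (pow_ne_zero 2 hD)
    have h4 := h2.const_mul (-(deriv p u))
    rw [pd2, heq.deriv_eq, show deriv (fun v' => -(deriv p u) * ((p u + c * v') ^ 2)⁻¹) v = _ from h4.deriv]
    simp only [Pi.pow_apply]
    field_simp
    ring
  constructor
  · intro H u hu
    set v : ℝ := (1 - p u) / c with hvdef
    have hDv : p u + c * v = 1 := by
      rw [hvdef]; field_simp; ring
    have hD1 : p u + c * v ≠ 0 := by rw [hDv]; norm_num
    have hE := H u hu v hD1
    rw [hC u v hD1, hM u hu v hD1, hB u hu v hD1, hDv] at hE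
    have hvc : c * v = 1 - p u := by rw [hvdef]; field_simp
    have hE' : 2*c^2 - 4*(1 - p u)*deriv p u + 4*deriv p u = 0 := by
      rw [← hvc]; linear_combination hE
    linear_combination (1/4) * hE' - (1/2) * hc2
  · intro H u hu v hD
    rw [hC u v hD, hM u hu v hD, hB u hu v hD]
    have hpp := H u hu
    field_simp
    nlinarith [hpp, hc2]
end

section
/- Let σ be a real constant and let p = p(u), q = q(u) be differentiable functions on an open interval I with q nowhere zero. Consider Φ(u,v) := q(u)/((p(u) + q(u)·v)² + σ) on an open set where the denominator is nonzero. Then Φ satisfies (†): Φ_vv − 2v·Φ_uv − 4Φ_u = 0 if and only if both 2p(u)·q'(u) − q(u)·p'(u) = 0 and 2·(p(u)² + σ)·q'(u) + q(u)³ = 0 hold for all u ∈ I. -/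
open Topology

lemma hd_lin (d e v : ℝ) : HasDerivAt (fun y => d + e*y) e v := by
  simpa using ((hasDerivAt_id v).const_mul e).const_add d

lemma hd_den (σ d e v : ℝ) : HasDerivAt (fun y => (d + e*y)^2 + σ) (2*(d+e*v)*e) v := by
  have h := ((hd_lin d e v).pow 2).add_const σ
  exact h.congr_deriv (by simp)

lemma aux_pd2 (σ k d e v : ℝ) (hD : (d + e*v)^2 + σ ≠ 0) :
    deriv (fun y => k / ((d + e*y)^2 + σ)) v
      = -(2*k*e*(d+e*v)) / ((d + e*v)^2 + σ)^2 := by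
  refine ((hasDerivAt_const v k).div (hd_den σ d e v) hD).deriv.trans ?_
  field_simp; ring

lemma aux_pd2pd2 (σ k d e v : ℝ) (hD : (d+e*v)^2+σ ≠ 0) :
    deriv (fun y => -(2*k*e*(d+e*y)) / ((d+e*y)^2+σ)^2) v
      = (2*k*e*e*(3*(d+e*v)^2 - σ)) / ((d+e*v)^2+σ)^3 := by
  have hnum : HasDerivAt (fun y => -(2*k*e*(d+e*y))) (-(2*k*e*e)) v :=
    ((hd_lin d e v).const_mul (2*k*e)).neg
  have hden : HasDerivAt (fun y => ((d+e*y)^2+σ)^2)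
      (2*((d+e*v)^2+σ)*(2*(d+e*v)*e)) v := by
    have := (hd_den σ d e v).pow 2
    exact this.congr_deriv (by simp)
  refine (hnum.div hden (pow_ne_zero 2 hD)).deriv.trans ?_
  field_simp; ring

lemma aux_pd1 (σ : ℝ) (p q : ℝ → ℝ) (u v : ℝ) (hp : DifferentiableAt ℝ p u)
    (hq : DifferentiableAt ℝ q u) (hD : (p u + q u * v)^2 + σ ≠ 0) :
    deriv (fun t => q t / ((p t + q t * v)^2 + σ)) u
    = (deriv q u * ((p u + q u*v)^2+σ)
        - 2*(q u)*(p u + q u*v)*(deriv p u + deriv q u * v)) / ((p u + q u*v)^2+σ)^2 := by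
  have hw : HasDerivAt (fun t => p t + q t * v) (deriv p u + deriv q u * v) u :=
    hp.hasDerivAt.add (hq.hasDerivAt.mul_const v)
  have hden : HasDerivAt (fun t => (p t + q t * v)^2 + σ)
      (2*(p u + q u * v)*(deriv p u + deriv q u * v)) u := by
    have := (hw.pow 2).add_const σ
    exact this.congr_deriv (by simp)
  refine (hq.hasDerivAt.div hden hD).deriv.trans ?_
  field_simp

lemma aux_G (σ d e P Q v : ℝ) (hD : (d+e*v)^2+σ ≠ 0) :
    deriv (fun y => (Q*((d+e*y)^2+σ) - 2*e*((d+e*y)*(P+Q*y))) / ((d+e*y)^2+σ)^2) v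
    = ((Q*(2*(d+e*v)*e) - 2*e*(e*(P+Q*v) + (d+e*v)*Q)) * ((d+e*v)^2+σ)
        - 4*(d+e*v)*e*(Q*((d+e*v)^2+σ) - 2*e*(d+e*v)*(P+Q*v))) / ((d+e*v)^2+σ)^3 := by
  have hnum : HasDerivAt (fun y => Q*((d+e*y)^2+σ) - 2*e*((d+e*y)*(P+Q*y)))
      (Q*(2*(d+e*v)*e) - 2*e*(e*(P+Q*v) + (d+e*v)*Q)) v := by
    have h1 := (hd_den σ d e v).const_mul Q
    have h2 : HasDerivAt (fun y => (d+e*y)*(P+Q*y)) (e*(P+Q*v) + (d+e*v)*Q) v :=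
      (hd_lin d e v).mul (hd_lin P Q v)
    exact h1.sub (h2.const_mul (2*e))
  have hden : HasDerivAt (fun y => ((d+e*y)^2+σ)^2)
      (2*((d+e*v)^2+σ)*(2*(d+e*v)*e)) v := by
    have := (hd_den σ d e v).pow 2
    exact this.congr_deriv (by simp)
  refine (hnum.div hden (pow_ne_zero 2 hD)).deriv.trans ?_
  field_simp; ring

/-- For `Φ(u,v) = q(u)/((p(u) + q(u)v)² + σ)` with `q` nowhere zero, the transformed
projective PDE `Φ_vv − 2v·Φ_uv − 4Φ_u = 0` (wherever the denominator is nonzero)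
holds if and only if `2pq' − qp' = 0` and `2(p² + σ)q' + q³ = 0` on `I`. -/
theorem stmt_11 (σ : ℝ) (a b : ℝ) (p q : ℝ → ℝ)
    (hp : ∀ u ∈ Set.Ioo a b, DifferentiableAt ℝ p u)
    (hq : ∀ u ∈ Set.Ioo a b, DifferentiableAt ℝ q u)
    (hq0 : ∀ u ∈ Set.Ioo a b, q u ≠ 0)
    (Φ : ℝ → ℝ → ℝ)
    (hΦ : ∀ u v, Φ u v = q u / ((p u + q u * v) ^ 2 + σ)) :
    (∀ u ∈ Set.Ioo a b, ∀ v : ℝ, (p u + q u * v) ^ 2 + σ ≠ 0 →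
        pd2 (pd2 Φ) u v - 2 * v * pd2 (pd1 Φ) u v - 4 * pd1 Φ u v = 0) ↔
    (∀ u ∈ Set.Ioo a b, 2 * p u * deriv q u - q u * deriv p u = 0 ∧
        2 * ((p u) ^ 2 + σ) * deriv q u + (q u) ^ 3 = 0) := by
  have hE : ∀ u ∈ Set.Ioo a b, ∀ v : ℝ, (p u + q u * v) ^ 2 + σ ≠ 0 →
      pd2 (pd2 Φ) u v - 2 * v * pd2 (pd1 Φ) u v - 4 * pd1 Φ u v
      = ((2 * p u * deriv q u - q u * deriv p u) *
            (4*(p u + q u*v)^3 - 12*p u*(p u + q u*v)^2 - 12*σ*(p u + q u*v) + 4*p u*σ)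
          + (2 * ((p u) ^ 2 + σ) * deriv q u + (q u) ^ 3) * (6*(p u + q u*v)^2 - 2*σ))
        / ((p u + q u*v)^2 + σ)^3 := by
    intro u hu v hD
    have hΦu : Φ u = fun y => q u / ((p u + q u * y) ^ 2 + σ) := funext (hΦ u)
    have hUev : ∀ᶠ y in 𝓝 v, (p u + q u * y) ^ 2 + σ ≠ 0 := by
      have hc : ContinuousAt (fun y => (p u + q u * y) ^ 2 + σ) v := by fun_prop
      exact hc.eventually_ne hD
    have h2 : ∀ y : ℝ, (p u + q u * y) ^ 2 + σ ≠ 0 →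
        pd2 Φ u y = -(2*(q u)*(q u)*(p u + q u*y)) / ((p u + q u*y)^2 + σ)^2 := by
      intro y hy
      show deriv (Φ u) y = _
      rw [hΦu]
      exact aux_pd2 σ (q u) (p u) (q u) y hy
    have h1 : ∀ y : ℝ, (p u + q u * y) ^ 2 + σ ≠ 0 →
        pd1 Φ u y = (deriv q u * ((p u + q u*y)^2 + σ)
          - 2*(q u)*(p u + q u*y)*(deriv p u + deriv q u * y)) / ((p u + q u*y)^2 + σ)^2 := by
      intro y hy
      show deriv (fun t => Φ t y) u = _
      have hfun : (fun t => Φ t y) = fun t => q t / ((p t + q t * y) ^ 2 + σ) :=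
        funext fun t => hΦ t y
      rw [hfun]
      exact aux_pd1 σ p q u y (hp u hu) (hq u hu) hy
    have h22 : pd2 (pd2 Φ) u v
        = (2*(q u)*(q u)*(q u)*(3*(p u + q u*v)^2 - σ)) / ((p u + q u*v)^2 + σ)^3 := by
      show deriv (pd2 Φ u) v = _
      have heq : (pd2 Φ u) =ᶠ[𝓝 v]
          (fun y => -(2*(q u)*(q u)*(p u + q u*y)) / ((p u + q u*y)^2 + σ)^2) :=
        hUev.mono fun y hy => h2 y hy
      rw [heq.deriv_eq]
      exact aux_pd2pd2 σ (q u) (p u) (q u) v hD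
    have h21 : pd2 (pd1 Φ) u v
        = ((deriv q u*(2*(p u + q u*v)*(q u))
              - 2*(q u)*((q u)*(deriv p u + deriv q u*v) + (p u + q u*v)*(deriv q u)))
                * ((p u + q u*v)^2 + σ)
            - 4*(p u + q u*v)*(q u)*(deriv q u*((p u + q u*v)^2 + σ)
              - 2*(q u)*(p u + q u*v)*(deriv p u + deriv q u*v)))
          / ((p u + q u*v)^2 + σ)^3 := by
      show deriv (fun y => pd1 Φ u y) v = _
      have heq : (fun y => pd1 Φ u y) =ᶠ[𝓝 v]
          (fun y => (deriv q u*((p u + q u*y)^2 + σ)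
            - 2*(q u)*((p u + q u*y)*(deriv p u + deriv q u*y)))
              / ((p u + q u*y)^2 + σ)^2) :=
        hUev.mono fun y hy => by show pd1 Φ u y = _; rw [h1 y hy]; ring
      rw [heq.deriv_eq]
      exact aux_G σ (p u) (q u) (deriv p u) (deriv q u) v hD
    rw [h22, h21, h1 v hD]
    field_simp
    ring
  constructor
  · intro hPDE u hu
    have hqu := hq0 u hu
    have hall0 : ∀ w : ℝ, w ^ 2 + σ ≠ 0 →
        (2 * p u * deriv q u - q u * deriv p u) *
            (4*w^3 - 12*p u*w^2 - 12*σ*w + 4*p u*σ)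
          + (2 * ((p u) ^ 2 + σ) * deriv q u + (q u) ^ 3) * (6*w^2 - 2*σ) = 0 := by
      intro w hw
      have hwv : p u + q u * ((w - p u)/(q u)) = w := by field_simp; ring
      have hD : (p u + q u * ((w - p u)/(q u))) ^ 2 + σ ≠ 0 := by rw [hwv]; exact hw
      have hz := hPDE u hu ((w - p u)/(q u)) hD
      rw [hE u hu ((w - p u)/(q u)) hD, hwv] at hz
      exact (div_eq_zero_iff.mp hz).resolve_right (pow_ne_zero 3 hw)
    have hdense : Dense ({w : ℝ | w ≠ Real.sqrt (-σ)} ∩ {w : ℝ | w ≠ -Real.sqrt (-σ)}) :=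
      (dense_compl_singleton _).inter_of_isOpen_left (dense_compl_singleton _)
        isOpen_compl_singleton
    have hfun : (fun w : ℝ => (2 * p u * deriv q u - q u * deriv p u) *
            (4*w^3 - 12*p u*w^2 - 12*σ*w + 4*p u*σ)
          + (2 * ((p u) ^ 2 + σ) * deriv q u + (q u) ^ 3) * (6*w^2 - 2*σ))
        = fun _ => (0 : ℝ) := by
      apply Continuous.ext_on hdense (by fun_prop) continuous_const
      intro w hw
      apply hall0
      intro hcon
      have hsq : w ^ 2 = -σ := by linarith
      have habs : |w| = Real.sqrt (-σ) := by
        rw [← Real.sqrt_sq_eq_abs, hsq]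
      rcases (abs_eq (Real.sqrt_nonneg _)).mp habs with h | h
      · exact hw.1 h
      · exact hw.2 h
    have hall : ∀ w : ℝ, (2 * p u * deriv q u - q u * deriv p u) *
            (4*w^3 - 12*p u*w^2 - 12*σ*w + 4*p u*σ)
          + (2 * ((p u) ^ 2 + σ) * deriv q u + (q u) ^ 3) * (6*w^2 - 2*σ) = 0 :=
      fun w => congrFun hfun w
    have hA : 2 * p u * deriv q u - q u * deriv p u = 0 := by
      linear_combination (hall 2 - hall (-2) - 2*hall 1 + 2*hall (-1))/48
    have hB : 2 * ((p u) ^ 2 + σ) * deriv q u + (q u) ^ 3 = 0 := by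
      linear_combination (hall 1 + hall (-1) - 2*hall 0)/12 + 2*(p u)*hA
    exact ⟨hA, hB⟩
  · intro h u hu v hD
    rw [hE u hu v hD, (h u hu).1, (h u hu).2]
    simp
end
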